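/- Let K be a field of characteristic zero with algebraic closure K̄, and let C ∈ K[x₁,…,x_{n+1}] be a non-constant homogeneous polynomial. If there exist an integer k ≥ 2 and a polynomial c ∈ K̄[x₁,…,x_{n+1}] with C = c^k, then there exist α ∈ K and c' ∈ K[x₁,…,x_{n+1}] with C = α·(c')^k. Equivalently: if a non-constant homogeneous C ∈ K[x₁,…,x_{n+1}] is closed over K (not of the form α·c^k with α ∈ K, c non-constant, k ≥ 2), then C remains closed over K̄. -/

import Mathlib

open Polynomial in
/-- In a multivariate polynomial ring over an algebraically closed field,
if `x ^ k = y ^ k` then `x = ζ • y` for some constant `ζ`. -/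
private lemma exists_C_mul_of_pow_eq_pow {L : Type*} [Field L] [IsAlgClosed L] {N : ℕ}
    {k : ℕ} (hk : k ≠ 0) {x y : MvPolynomial (Fin N) L}
    (h : x ^ k = y ^ k) : ∃ ζ : L, x = MvPolynomial.C ζ * y := by
  rcases eq_or_ne y 0 with rfl | hy
  · refine ⟨1, ?_⟩
    have hx : x = 0 := pow_eq_zero_iff hk |>.mp (by simpa [zero_pow hk] using h)
    simp [hx]
  · set F := FractionRing (MvPolynomial (Fin N) L)
    set φ : MvPolynomial (Fin N) L →+* F := algebraMap _ F with hφdef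
    have hφ : Function.Injective φ := IsFractionRing.injective (MvPolynomial (Fin N) L) F
    have hφy : φ y ≠ 0 := fun h0 => hy (hφ (by simpa using h0))
    set t : F := φ x / φ y with ht_def
    have ht : t ^ k = 1 := by
      rw [ht_def, div_pow, ← map_pow, ← map_pow, h, div_self (by rw [map_pow]; exact pow_ne_zero _ hφy)]
    set p : L[X] := X ^ k - Polynomial.C 1 with hp_def
    have hmonic : p.Monic := monic_X_pow_sub_C 1 hk
    have hsplit : p.Splits := IsAlgClosed.splits p
    set f : L →+* F := φ.comp MvPolynomial.C with hf_def
    have hroot : Polynomial.eval₂ f t p = 0 := by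
      simp [hp_def, ht]
    have hfact : p = (p.roots.map fun a => X - Polynomial.C a).prod :=
      hsplit.eq_prod_roots_of_monic hmonic
    rw [hfact] at hroot
    rw [show Polynomial.eval₂ f t = Polynomial.eval₂RingHom f t from rfl,
      map_multiset_prod, Multiset.map_map] at hroot
    obtain ⟨u, hu, hu0⟩ := Multiset.mem_map.mp (Multiset.prod_eq_zero_iff.mp hroot)
    have htu : t = f u := by
      have : Polynomial.eval₂ f t (X - Polynomial.C u) = 0 := hu0
      simpa [sub_eq_zero] using this
    refine ⟨u, hφ ?_⟩
    rw [map_mul]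
    have : φ x = f u * φ y := by
      rw [← htu, ht_def, div_mul_cancel₀ _ hφy]
    simpa [hf_def] using this

/-- An element of the algebraic closure fixed by every `K`-algebra automorphism
lies in (the image of) `K`. -/
private lemma fixed_mem_range_algebraMap {K : Type*} [Field K] [CharZero K]
    (x : AlgebraicClosure K)
    (h : ∀ σ : AlgebraicClosure K ≃ₐ[K] AlgebraicClosure K, σ x = x) :
    x ∈ (algebraMap K (AlgebraicClosure K)).range := by
  by_contra hx
  have hint : IsIntegral K x := Algebra.IsIntegral.isIntegral x
  have hdeg : 2 ≤ (minpoly K x).natDegree := (minpoly.two_le_natDegree_iff hint).mpr hx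
  have hsep : (minpoly K x).Separable := (minpoly.irreducible hint).separable
  have hsplits : ((minpoly K x).map (algebraMap K (AlgebraicClosure K))).Splits :=
    IsAlgClosed.splits _
  have hcard : Fintype.card ((minpoly K x).rootSet (AlgebraicClosure K))
      = (minpoly K x).natDegree := Polynomial.card_rootSet_eq_natDegree hsep hsplits
  have hxmem : x ∈ (minpoly K x).rootSet (AlgebraicClosure K) := by
    rw [Polynomial.mem_rootSet]
    exact ⟨minpoly.ne_zero hint, minpoly.aeval K x⟩
  have hlt : 1 < Fintype.card ((minpoly K x).rootSet (AlgebraicClosure K)) := by omega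
  obtain ⟨⟨y, hy⟩, hne⟩ := Fintype.exists_ne_of_one_lt_card hlt ⟨x, hxmem⟩
  have hyx : y ≠ x := fun he => hne (Subtype.ext he)
  have hyroot : Polynomial.aeval y (minpoly K x) = 0 := (Polynomial.mem_rootSet.mp hy).2
  obtain ⟨σ, hσ⟩ := minpoly.exists_algEquiv_of_root hint.isAlgebraic hyroot
  exact hyx (σ.injective (by rw [hσ, h σ]))

open MvPolynomial

/-- Let `C ∈ K[x₁,…,x_{n+1}]` be a non-constant homogeneous polynomial over a
field `K` of characteristic zero with algebraic closure `K̄`.  If `C = c ^ k`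
for some `k ≥ 2` and `c ∈ K̄[x₁,…,x_{n+1}]`, then already `C = α·(c')^k` for
some `α ∈ K` and `c' ∈ K[x₁,…,x_{n+1}]`; i.e. a closed homogeneous polynomial
stays closed over the algebraic closure. -/
theorem stmt15 {K : Type*} [Field K] [CharZero K] (n : ℕ)
    (Cp : MvPolynomial (Fin (n + 1)) K) (m : ℕ) (hhom : Cp.IsHomogeneous m)
    (hnc : Cp ∉ Set.range (MvPolynomial.C : K → MvPolynomial (Fin (n + 1)) K))
    (k : ℕ) (hk : 2 ≤ k)
    (c : MvPolynomial (Fin (n + 1)) (AlgebraicClosure K))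
    (hc : MvPolynomial.map (algebraMap K (AlgebraicClosure K)) Cp = c ^ k) :
    ∃ (α : K) (c' : MvPolynomial (Fin (n + 1)) K),
      Cp = MvPolynomial.C α * c' ^ k := by
  classical
  have hk0 : k ≠ 0 := by omega
  set L := AlgebraicClosure K
  have hCp0 : Cp ≠ 0 := fun h => hnc ⟨0, by simp [h]⟩
  have hmapinj : Function.Injective (MvPolynomial.map (σ := Fin (n + 1)) (algebraMap K L)) :=
    MvPolynomial.map_injective _ (algebraMap K L).injective
  have hc0 : c ≠ 0 := by
    intro h0
    apply hCp0
    apply hmapinj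
    rw [hc, h0, zero_pow hk0, map_zero]
  obtain ⟨d0, hd0⟩ := MvPolynomial.ne_zero_iff.mp hc0
  set a := MvPolynomial.coeff d0 c with ha_def
  -- for every automorphism σ, σ(c) = ζ·c for some root of unity ζ
  have key : ∀ σ : L ≃ₐ[K] L, ∃ ζ : L,
      MvPolynomial.map σ.toAlgHom.toRingHom c = MvPolynomial.C ζ * c ∧ ζ ^ k = 1 := by
    intro σ
    have h1 : MvPolynomial.map σ.toAlgHom.toRingHom (MvPolynomial.map (algebraMap K L) Cp)
        = MvPolynomial.map (algebraMap K L) Cp := by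
      rw [MvPolynomial.map_map,
        show (σ.toAlgHom.toRingHom).comp (algebraMap K L) = algebraMap K L from
          RingHom.ext fun x => σ.commutes x]
    have h2 : (MvPolynomial.map σ.toAlgHom.toRingHom c) ^ k = c ^ k := by
      rw [← map_pow, ← hc, h1, hc]
    obtain ⟨ζ, hζ⟩ := exists_C_mul_of_pow_eq_pow hk0 h2
    refine ⟨ζ, hζ, ?_⟩
    rw [hζ, mul_pow, ← MvPolynomial.C_pow] at h2
    have := mul_right_cancel₀ (pow_ne_zero k hc0) (h2.trans (one_mul (c ^ k)).symm)
    exact MvPolynomial.C_injective _ _ (this.trans MvPolynomial.C_1.symm)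
  -- coefficient behaviour under σ
  have coeff_eq : ∀ (σ : L ≃ₐ[K] L) (ζ : L),
      MvPolynomial.map σ.toAlgHom.toRingHom c = MvPolynomial.C ζ * c →
      ∀ d, σ (MvPolynomial.coeff d c) = ζ * MvPolynomial.coeff d c := by
    intro σ ζ hζ d
    have := congrArg (MvPolynomial.coeff d) hζ
    simpa [MvPolynomial.coeff_map, MvPolynomial.coeff_C_mul] using this
  -- each normalized coefficient is Galois-fixed hence in K
  have coeffK : ∀ d, ∃ b : K,
      algebraMap K L b = a⁻¹ * MvPolynomial.coeff d c := by
    intro d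
    have hfix : ∀ σ : L ≃ₐ[K] L,
        σ (a⁻¹ * MvPolynomial.coeff d c) = a⁻¹ * MvPolynomial.coeff d c := by
      intro σ
      obtain ⟨ζ, hζ, hζk⟩ := key σ
      have hζ0 : ζ ≠ 0 := by
        intro h0; rw [h0, zero_pow hk0] at hζk; exact zero_ne_one hζk
      have h1 := coeff_eq σ ζ hζ d
      have h2 := coeff_eq σ ζ hζ d0
      rw [map_mul, map_inv₀, h1, h2, mul_inv]
      field_simp [hζ0]
      rw [← ha_def, mul_comm ζ⁻¹, mul_assoc, inv_mul_cancel_left₀ hζ0, mul_comm, ← div_eq_mul_inv]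
    exact fixed_mem_range_algebraMap _ hfix
  have hak : ∀ σ : L ≃ₐ[K] L, σ (a ^ k) = a ^ k := by
    intro σ
    obtain ⟨ζ, hζ, hζk⟩ := key σ
    rw [map_pow, coeff_eq σ ζ hζ d0, mul_pow, hζk, one_mul]
  obtain ⟨α, hα⟩ := fixed_mem_range_algebraMap _ hak
  set q : MvPolynomial (Fin (n + 1)) L := MvPolynomial.C a⁻¹ * c with hq_def
  choose b hb using coeffK
  set c' : MvPolynomial (Fin (n + 1)) K :=
    ∑ d ∈ q.support, MvPolynomial.monomial d (b d) with hc'_def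
  have hmapc' : MvPolynomial.map (algebraMap K L) c' = q := by
    rw [hc'_def, map_sum]
    have : ∀ d ∈ q.support,
        MvPolynomial.map (algebraMap K L) (MvPolynomial.monomial d (b d))
        = MvPolynomial.monomial d (MvPolynomial.coeff d q) := by
      intro d _
      rw [MvPolynomial.map_monomial, hb, hq_def]
      simp [MvPolynomial.coeff_C_mul]
    rw [Finset.sum_congr rfl this]
    exact MvPolynomial.support_sum_monomial_coeff q
  have hcq : c = MvPolynomial.C a * q := by
    rw [hq_def, ← mul_assoc, ← MvPolynomial.C_mul, mul_inv_cancel₀ hd0,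
      MvPolynomial.C_1, one_mul]
  have hkey : MvPolynomial.map (algebraMap K L) (MvPolynomial.C α * c' ^ k) = c ^ k := by
    rw [map_mul, map_pow, hmapc', MvPolynomial.map_C, hα, hq_def, mul_pow,
      ← MvPolynomial.C_pow, ← mul_assoc, ← MvPolynomial.C_mul, inv_pow,
      mul_inv_cancel₀ (pow_ne_zero k hd0), MvPolynomial.C_1, one_mul]
  refine ⟨α, c', hmapinj ?_⟩
  rw [hc, hkey]
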